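/- Let n ≥ 1 and 1 ≤ k ≤ n, and let M_k be a matching with k edges in the complete graph K_{2n+1}. Then the edge-locating chromatic number of the graph K_{2n+1} − M_k (obtained from K_{2n+1} by deleting the edges of M_k) equals 2n + 1 if 1 ≤ k ≤ n − 1, and equals 2n if k = n. -/

import Mathlib

open SimpleGraph

/-- Distance from a vertex to an edge: the minimum of the distances to the two endpoints. -/
noncomputable def edgeDist {V : Type*} (G : SimpleGraph V) (v : V) (e : Sym2 V) : ℕ :=
  Sym2.lift ⟨fun x y => min (G.dist v x) (G.dist v y), fun _ _ => min_comm _ _⟩ e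

/-- Distance (in `ℕ∞`) from a vertex to the `i`-th color class of an edge coloring `c`
(it is `⊤` if the class is empty). -/
noncomputable def classDist {V : Type*} (G : SimpleGraph V) {k : ℕ} (c : Sym2 V → Fin k)
    (v : V) (i : Fin k) : ℕ∞ :=
  ⨅ e ∈ {e | e ∈ G.edgeSet ∧ c e = i}, (edgeDist G v e : ℕ∞)

/-- `c` is an edge-locating `k`-coloring of `G`: it is a proper edge coloring (distinct edges
sharing an endpoint get different colors), and distinct vertices have distinct edge color codes
`(d(v, C_1), …, d(v, C_k))`. -/
def IsEdgeLocatingColoring {V : Type*} (G : SimpleGraph V) {k : ℕ} (c : Sym2 V → Fin k) : Prop :=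
  (∀ e ∈ G.edgeSet, ∀ f ∈ G.edgeSet, e ≠ f → (∃ x, x ∈ e ∧ x ∈ f) → c e ≠ c f) ∧
  (∀ u v : V, u ≠ v → ∃ i, classDist G c u i ≠ classDist G c v i)

/-- The edge-locating chromatic number `χ'_L(G)`: the least `k` such that `G` admits an
edge-locating `k`-coloring. -/
noncomputable def edgeLocatingChromaticNumber {V : Type*} (G : SimpleGraph V) : ℕ :=
  sInf {k | ∃ c : Sym2 V → Fin k, IsEdgeLocatingColoring G c}

/-- The join `G + H` of two graphs: all edges of `G`, all edges of `H`, and all edges between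
a vertex of `G` and a vertex of `H`. -/
def graphJoin {α β : Type*} (G : SimpleGraph α) (H : SimpleGraph β) : SimpleGraph (α ⊕ β) :=
  SimpleGraph.fromRel (fun x y =>
    (∃ a b, x = Sum.inl a ∧ y = Sum.inl b ∧ G.Adj a b) ∨
    (∃ a b, x = Sum.inr a ∧ y = Sum.inr b ∧ H.Adj a b) ∨
    (∃ a b, x = Sum.inl a ∧ y = Sum.inr b))

/-- A set `M` of edges of `G` forming a matching: pairwise vertex-disjoint edges of `G`. -/
def IsMatchingSet {V : Type*} (G : SimpleGraph V) (M : Set (Sym2 V)) : Prop :=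
  M ⊆ G.edgeSet ∧ ∀ e ∈ M, ∀ f ∈ M, e ≠ f → ∀ x, x ∈ e → x ∉ f

-- dist preserved by iso
lemma iso_dist_le {V W : Type*} {G : SimpleGraph V} {H : SimpleGraph W} (e : G ≃g H) (u v : V) :
    H.dist (e u) (e v) ≤ G.dist u v := by
    by_cases hr : G.Reachable u v
    · obtain ⟨p, hp⟩ := hr.exists_walk_length_eq_dist
      calc H.dist (e u) (e v) ≤ (p.map e.toHom).length := SimpleGraph.dist_le _
        _ = G.dist u v := by rw [SimpleGraph.Walk.length_map, hp]
    · rw [SimpleGraph.dist_eq_zero_of_not_reachable hr,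
        SimpleGraph.dist_eq_zero_of_not_reachable]
      intro ⟨q⟩
      exact hr ⟨(q.map e.symm.toHom).copy (e.symm_apply_apply u) (e.symm_apply_apply v)⟩
lemma iso_dist {V W : Type*} {G : SimpleGraph V} {H : SimpleGraph W} (e : G ≃g H) (u v : V) :
    H.dist (e u) (e v) = G.dist u v := by
  refine le_antisymm (iso_dist_le e u v) ?_
  have := iso_dist_le e.symm (e u) (e v)
  simpa using this

-- classDist = 0 iff incident edge of that color (needs connectivity)
lemma classDist_eq_zero_iff {V : Type*} {G : SimpleGraph V} (hG : G.Connected) {k : ℕ}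
    (c : Sym2 V → Fin k) (v : V) (i : Fin k) :
    classDist G c v i = 0 ↔ ∃ e ∈ G.edgeSet, c e = i ∧ v ∈ e := by
  constructor
  · intro h
    by_contra hno
    push_neg at hno
    have h1 : (1 : ℕ∞) ≤ classDist G c v i := by
      refine le_iInf₂ fun e he => ?_
      obtain ⟨he1, he2⟩ := he
      induction e with
      | _ x y =>
        have hx : v ≠ x := by rintro rfl; exact hno _ he1 he2 (Sym2.mem_mk_left _ _)
        have hy : v ≠ y := by rintro rfl; exact hno _ he1 he2 (Sym2.mem_mk_right _ _)
        have dx : 1 ≤ G.dist v x := (hG.pos_dist_of_ne hx)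
        have dy : 1 ≤ G.dist v y := (hG.pos_dist_of_ne hy)
        have : 1 ≤ edgeDist G v s(x, y) := le_min dx dy
        exact_mod_cast Nat.one_le_cast.mpr this
    rw [h] at h1
    exact (by simp : ¬ (1:ℕ∞) ≤ 0) h1
  · rintro ⟨e, he, hc, hv⟩
    refine le_antisymm ?_ (zero_le)
    have : edgeDist G v e = 0 := by
      induction e with
      | _ x y =>
        rcases Sym2.mem_iff.mp hv with rfl | rfl
        · simp [edgeDist, SimpleGraph.dist_self]
        · simp [edgeDist, SimpleGraph.dist_self]
    calc classDist G c v i ≤ (edgeDist G v e : ℕ∞) := iInf₂_le e ⟨he, hc⟩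
      _ = 0 := by rw [this]; rfl

lemma iso_edgeDist {V W : Type*} {G : SimpleGraph V} {H : SimpleGraph W} (φ : G ≃g H)
    (v : V) (f : Sym2 V) : edgeDist H (φ v) (Sym2.map φ f) = edgeDist G v f := by
  induction f with
  | _ x y => simp [edgeDist, Sym2.map_pair_eq, iso_dist φ]

lemma iso_mem_edgeSet {V W : Type*} {G : SimpleGraph V} {H : SimpleGraph W} (φ : G ≃g H)
    (f : Sym2 V) : Sym2.map φ f ∈ H.edgeSet ↔ f ∈ G.edgeSet := by
  induction f with
  | _ x y => simp [Sym2.map_pair_eq, SimpleGraph.mem_edgeSet, φ.map_adj_iff]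

lemma map_map_symm {V W : Type*} (φ : V ≃ W) (f : Sym2 W) :
    Sym2.map φ (Sym2.map φ.symm f) = f := by
  rw [Sym2.map_map]
  have : (φ : V → W) ∘ (φ.symm : W → V) = id := by funext x; simp
  rw [this, Sym2.map_id]; rfl

lemma iso_classDist {V W : Type*} {G : SimpleGraph V} {H : SimpleGraph W} (φ : G ≃g H)
    {k : ℕ} (c : Sym2 W → Fin k) (v : V) (i : Fin k) :
    classDist G (fun f => c (Sym2.map φ f)) v i = classDist H c (φ v) i := by
  apply le_antisymm
  · refine le_iInf₂ fun f hf => ?_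
    obtain ⟨hf1, hf2⟩ := hf
    have h1 : Sym2.map (φ : V → W) (Sym2.map (φ.symm : W → V) f) = f := map_map_symm φ.toEquiv f
    have hm : Sym2.map (φ.symm : W → V) f ∈ G.edgeSet := by
      rw [← iso_mem_edgeSet φ, h1]; exact hf1
    have hc : c (Sym2.map (φ : V → W) (Sym2.map (φ.symm : W → V) f)) = i := by rw [h1]; exact hf2
    refine le_trans (iInf₂_le (Sym2.map (φ.symm : W → V) f) ⟨hm, hc⟩) ?_
    rw [← iso_edgeDist φ v, h1]
  · refine le_iInf₂ fun f hf => ?_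
    obtain ⟨hf1, hf2⟩ := hf
    refine le_trans (iInf₂_le (Sym2.map (φ : V → W) f) ⟨(iso_mem_edgeSet φ f).mpr hf1, hf2⟩) ?_
    rw [iso_edgeDist φ v f]

lemma iso_locating {V W : Type*} {G : SimpleGraph V} {H : SimpleGraph W} (φ : G ≃g H)
    {k : ℕ} (c : Sym2 W → Fin k) (hc : IsEdgeLocatingColoring H c) :
    IsEdgeLocatingColoring G (fun f => c (Sym2.map φ f)) := by
  constructor
  · intro e he f hf hne hshare
    apply hc.1 _ ((iso_mem_edgeSet φ e).mpr he) _ ((iso_mem_edgeSet φ f).mpr hf)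
    · intro h
      apply hne
      have := congrArg (Sym2.map (φ.symm : W → V)) h
      rwa [Sym2.map_map, Sym2.map_map,
        (by funext x; simp : (φ.symm : W → V) ∘ (φ : V → W) = id), Sym2.map_id, id_eq, id_eq] at this
    · obtain ⟨x, hx1, hx2⟩ := hshare
      exact ⟨φ x, Sym2.mem_map.mpr ⟨x, hx1, rfl⟩, Sym2.mem_map.mpr ⟨x, hx2, rfl⟩⟩
  · intro u v huv
    obtain ⟨i, hi⟩ := hc.2 (φ u) (φ v) (fun h => huv (φ.toEquiv.injective h))
    exact ⟨i, by rwa [iso_classDist φ c u i, iso_classDist φ c v i]⟩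


lemma exists_perm_comp {α V : Type*} [Fintype V] [DecidableEq V] [Fintype α]
    (a b : α → V) (ha : Function.Injective a) (hb : Function.Injective b) :
    ∃ π : Equiv.Perm V, ∀ x, π (a x) = b x := by
  classical
  -- f : V → V, on range a defined as b ∘ a⁻¹
  set f : V → V := fun v => if h : ∃ x, a x = v then b h.choose else v with hf
  have hfa : ∀ x, f (a x) = b x := by
    intro x
    have h : ∃ y, a y = a x := ⟨x, rfl⟩
    simp only [hf, dif_pos h]
    congr 1
    exact ha h.choose_spec
  have hinj : Set.InjOn f (Set.range a) := by
    rintro v ⟨x, rfl⟩ w ⟨y, rfl⟩ h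
    rw [hfa, hfa] at h
    rw [hb h]
  have hs : Set.MapsTo f (Set.range a) (Finset.univ : Finset V) := fun v _ => Finset.mem_univ _
  obtain ⟨g, hg⟩ := Set.MapsTo.exists_equiv_extend_of_card_eq (by simp) hs hinj
  refine ⟨g.trans (Equiv.subtypeUnivEquiv (by simp)), fun x => ?_⟩
  have := hg (a x) ⟨x, rfl⟩
  simp only [Equiv.trans_apply, Equiv.subtypeUnivEquiv_apply]
  rw [this, hfa]

/-- From a matching of size k, extract an injective endpoint function. -/
lemma sym2_out {α : Type*} (z : Sym2 α) : s(z.out.1, z.out.2) = z := by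
  conv_rhs => rw [← z.out_eq]

lemma matching_param {V : Type*} [Fintype V] [DecidableEq V] {M : Set (Sym2 V)} {k : ℕ}
    (hM : IsMatchingSet (⊤ : SimpleGraph V) M) (hcard : M.ncard = k) :
    ∃ a : Fin k × Bool → V, Function.Injective a ∧
      M = Set.range (fun i : Fin k => s(a (i, false), a (i, true))) := by
  classical
  have hfin : M.Finite := Set.toFinite M
  haveI := hfin.fintype
  have hc : Fintype.card M = k := by
    rw [← Nat.card_eq_fintype_card, Nat.card_coe_set_eq, hcard]
  let q : Fin k ≃ M := (Fintype.equivFinOfCardEq hc).symm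
  refine ⟨fun p => if p.2 then ((q p.1 : Sym2 V)).out.2 else ((q p.1 : Sym2 V)).out.1, ?_, ?_⟩
  · have hout : ∀ e : M, ((e : Sym2 V)).out.1 ≠ ((e : Sym2 V)).out.2 := by
      rintro ⟨e, he⟩
      have hnd : ¬ e.IsDiag := by
        have := hM.1 he
        rw [SimpleGraph.edgeSet_top] at this
        exact this
      intro h
      apply hnd
      rw [← e.out_eq]
      exact Sym2.mk_isDiag_iff.mpr h
    have hmem1 : ∀ e : M, ((e : Sym2 V)).out.1 ∈ (e : Sym2 V) := fun e => Sym2.out_fst_mem _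
    have hmem2 : ∀ e : M, ((e : Sym2 V)).out.2 ∈ (e : Sym2 V) := fun e => Sym2.out_snd_mem _
    rintro ⟨i, si⟩ ⟨j, sj⟩ h
    simp only at h
    by_cases hij : i = j
    · subst hij
      cases si <;> cases sj
      · rfl
      · simp only [if_true, if_false, Bool.false_eq_true] at h
        exact absurd h (hout (q i))
      · simp only [if_true, if_false, Bool.false_eq_true] at h
        exact absurd h.symm (hout (q i))
      · rfl
    · exfalso
      have hqne : (q i : Sym2 V) ≠ (q j : Sym2 V) := by
        intro hh
        exact hij (q.injective (Subtype.ext hh))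
      refine hM.2 _ (q i).2 _ (q j).2 hqne
        (if si = true then ((q i : Sym2 V)).out.2 else ((q i : Sym2 V)).out.1) ?_ ?_
      · cases si <;> simp [hmem1 _, hmem2 _]
      · rw [h]; cases sj <;> simp [hmem1 _, hmem2 _]
  · ext e
    simp only [Set.mem_range, if_true, if_false, Bool.false_eq_true]
    constructor
    · intro he
      refine ⟨q.symm ⟨e, he⟩, ?_⟩
      simp only [Equiv.apply_symm_apply]
      exact sym2_out _
    · rintro ⟨i, rfl⟩
      have : s((q i : Sym2 V).out.1, (q i : Sym2 V).out.2) = (q i : Sym2 V) := sym2_out _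
      rw [this]
      exact (q i).2

lemma exists_perm_matching {V : Type*} [Fintype V] [DecidableEq V] {M : Set (Sym2 V)} {k : ℕ}
    (hM : IsMatchingSet (⊤ : SimpleGraph V) M) (hcard : M.ncard = k)
    (b : Fin k × Bool → V) (hb : Function.Injective b) :
    ∃ π : Equiv.Perm V, Sym2.map π '' M = Set.range (fun i : Fin k => s(b (i, false), b (i, true))) := by
  obtain ⟨a, ha, hMa⟩ := matching_param hM hcard
  obtain ⟨π, hπ⟩ := exists_perm_comp a b ha hb
  refine ⟨π, ?_⟩
  rw [hMa]
  ext e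
  constructor
  · rintro ⟨f, ⟨i, rfl⟩, rfl⟩
    exact ⟨i, by rw [Sym2.map_pair_eq, hπ, hπ]⟩
  · rintro ⟨i, rfl⟩
    exact ⟨s(a (i,false), a (i,true)), ⟨i, rfl⟩, by rw [Sym2.map_pair_eq, hπ, hπ]⟩

lemma matching_del_connected {V : Type*} [Fintype V] {M : Set (Sym2 V)}
    (hM : IsMatchingSet (⊤ : SimpleGraph V) M) (hV : 3 ≤ Fintype.card V) :
    ((⊤ : SimpleGraph V).deleteEdges M).Connected := by
  classical
  rw [SimpleGraph.connected_iff]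
  constructor
  · intro u v
    by_cases huv : u = v
    · subst huv; exact SimpleGraph.Reachable.refl u
    have key : ∀ x y : V, x ≠ y → s(x,y) ∉ M →
        ((⊤ : SimpleGraph V).deleteEdges M).Adj x y := by
      intro x y hxy hm
      rw [SimpleGraph.deleteEdges_adj]
      exact ⟨hxy, hm⟩
    by_cases hm : s(u,v) ∈ M
    · -- go through a third vertex
      have : ({u, v}ᶜ : Finset V).Nonempty := by
        rw [← Finset.card_pos, Finset.card_compl]
        have : ({u, v} : Finset V).card ≤ 2 := Finset.card_insert_le _ _ |>.trans (by simp)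
        omega
      obtain ⟨w, hw⟩ := this
      simp only [Finset.mem_compl, Finset.mem_insert, Finset.mem_singleton, not_or] at hw
      have h1 : s(u,w) ∉ M := by
        intro hc
        refine hM.2 _ hm _ hc ?_ u (Sym2.mem_mk_left _ _) (Sym2.mem_mk_left _ _)
        intro h
        rw [Sym2.eq_iff] at h
        rcases h with ⟨-, h2⟩ | ⟨h1, -⟩
        · exact hw.2 h2.symm
        · exact hw.1 h1.symm
      have h2 : s(w,v) ∉ M := by
        intro hc
        refine hM.2 _ hm _ hc ?_ v (Sym2.mem_mk_right _ _) (Sym2.mem_mk_right _ _)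
        intro h
        rw [Sym2.eq_iff] at h
        rcases h with ⟨h1, -⟩ | ⟨h1x, -⟩
        · exact hw.1 h1.symm
        · exact huv h1x
      exact ((key u w (fun h => hw.1 h.symm) h1).reachable).trans
        ((key w v (fun h => hw.2 h) h2).reachable)
    · exact (key u v huv hm).reachable
  · have : 0 < Fintype.card V := by omega
    exact Fintype.card_pos_iff.mp this


def delIso {V : Type*} (π : Equiv.Perm V) (M M' : Set (Sym2 V)) (h : Sym2.map π '' M = M') :
    ((⊤ : SimpleGraph V).deleteEdges M) ≃g ((⊤ : SimpleGraph V).deleteEdges M') where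
  toEquiv := π
  map_rel_iff' := by
    intro x y
    simp only [SimpleGraph.deleteEdges_adj, SimpleGraph.top_adj, Equiv.coe_fn_mk]
    constructor
    · rintro ⟨h1, h2⟩
      refine ⟨fun hh => h1 (by rw [hh]), fun hm => h2 ?_⟩
      rw [← h]
      exact ⟨s(x,y), hm, by rw [Sym2.map_pair_eq]⟩
    · rintro ⟨h1, h2⟩
      refine ⟨fun hh => h1 (π.injective hh), fun hm => h2 ?_⟩
      rw [← h] at hm
      obtain ⟨f, hf, hfe⟩ := hm
      have : f = s(x,y) := by
        have := congrArg (Sym2.map (π.symm : V → V)) hfe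
        rwa [Sym2.map_map, (by funext z; simp : (π.symm : V → V) ∘ (π : V → V) = id),
          Sym2.map_id, id_eq, Sym2.map_pair_eq, Equiv.symm_apply_apply, Equiv.symm_apply_apply] at this
      rwa [this] at hf

section canon
variable (n k : ℕ)

local notation "V" => ZMod (2*n+1)

/-- the `i`-th canonical vertex -/
def cc (i : Fin k) : V := (((i : ℕ) + 1 : ℕ) : V)

/-- canonical matching of size k -/
def canonM : Set (Sym2 V) := Set.range (fun i : Fin k => s(cc n k i, -cc n k i))

variable (hn : 1 ≤ n) (hkn : k ≤ n)
include hn hkn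

lemma val_cc (i : Fin k) : (cc n k i).val = (i : ℕ) + 1 := by
  have : (i : ℕ) + 1 < 2*n+1 := by have := i.2; omega
  exact ZMod.val_cast_of_lt this

lemma cc_ne_zero (i : Fin k) : cc n k i ≠ 0 := by
  intro h
  have := val_cc n k hn hkn i
  rw [h] at this
  simp [ZMod.val_zero] at this

lemma val_neg_cc (i : Fin k) : (-cc n k i).val = 2*n - (i : ℕ) := by
  rw [ZMod.neg_val]
  rw [if_neg (cc_ne_zero n k hn hkn i), val_cc n k hn hkn]
  have := i.2
  omega

lemma cc_ne_neg (i j : Fin k) : cc n k i ≠ -cc n k j := by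
  intro h
  have h1 := val_cc n k hn hkn i
  have h2 := val_neg_cc n k hn hkn j
  rw [h] at h1
  have hi := i.2; have hj := j.2
  omega

lemma cc_inj : Function.Injective (cc n k) := by
  intro i j h
  have h1 := val_cc n k hn hkn i
  have h2 := val_cc n k hn hkn j
  rw [h] at h1
  ext
  omega

/-- the canonical injection -/
def gcan : Fin k × Bool → V := fun p => if p.2 then -cc n k p.1 else cc n k p.1

lemma gcan_inj : Function.Injective (gcan n k) := by
  rintro ⟨i, si⟩ ⟨j, sj⟩ h
  simp only [gcan] at h
  cases si <;> cases sj <;> simp only [if_true, if_false, Bool.false_eq_true] at h ⊢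
  · rw [cc_inj n k hn hkn h]
  · exact absurd h (cc_ne_neg n k hn hkn i j)
  · exact absurd h.symm (cc_ne_neg n k hn hkn j i)
  · rw [cc_inj n k hn hkn (neg_injective h)]

lemma canonM_sum_eq_zero {x y : V} (h : s(x,y) ∈ canonM n k) : x + y = 0 := by
  obtain ⟨i, hi⟩ := h
  rw [Sym2.eq_iff] at hi
  rcases hi with ⟨h1, h2⟩ | ⟨h1, h2⟩ <;> rw [← h1, ← h2] <;> ring

lemma canonM_mem_iff {x y : V} : s(x,y) ∈ canonM n k ↔ y = -x ∧ ∃ i : Fin k, x = cc n k i ∨ x = -cc n k i := by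
  constructor
  · intro h
    obtain ⟨i, hi⟩ := h
    rw [Sym2.eq_iff] at hi
    rcases hi with ⟨h1, h2⟩ | ⟨h1, h2⟩
    · exact ⟨by rw [← h1, ← h2], i, Or.inl h1.symm⟩
    · exact ⟨by rw [← h1, ← h2]; ring, i, Or.inr h2.symm⟩
  · rintro ⟨rfl, i, rfl | h⟩
    · exact ⟨i, rfl⟩
    · exact ⟨i, by rw [h]; rw [neg_neg]; exact Sym2.eq_swap⟩

lemma canonM_isMatching : IsMatchingSet (⊤ : SimpleGraph V) (canonM n k) := by
  constructor
  · rintro e ⟨i, rfl⟩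
    rw [SimpleGraph.mem_edgeSet, SimpleGraph.top_adj]
    exact fun h => cc_ne_neg n k hn hkn i i h
  · rintro e ⟨i, rfl⟩ f ⟨j, rfl⟩ hne x hx hx'
    apply hne
    simp only [Sym2.mem_iff] at hx hx'
    have hij : i = j := by
      rcases hx with rfl | rfl <;> rcases hx' with h | h
      · exact cc_inj n k hn hkn h
      · exact absurd h (cc_ne_neg n k hn hkn i j)
      · exact absurd h.symm (cc_ne_neg n k hn hkn j i)
      · exact cc_inj n k hn hkn (neg_injective h)
    rw [hij]
  
lemma canonM_ncard : (canonM n k).ncard = k := by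
  have hinj : Function.Injective (fun i : Fin k => s(cc n k i, -cc n k i)) := by
    intro i j h
    rw [Sym2.eq_iff] at h
    rcases h with ⟨h1, _⟩ | ⟨h1, _⟩
    · exact cc_inj n k hn hkn h1
    · exact absurd h1 (cc_ne_neg n k hn hkn i j)
  rw [canonM, ← Set.image_univ, Set.ncard_image_of_injective _ hinj]
  simp [Set.ncard_univ]

end canon

section main
variable (n k : ℕ)
local notation "V" => ZMod (2*n+1)

def sumE : Sym2 V → V := Sym2.lift ⟨fun x y => x + y, fun _ _ => add_comm _ _⟩

lemma sumE_pair (x y : V) : sumE n s(x,y) = x + y := rfl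

lemma recon (e : Sym2 V) (x : V) (hx : x ∈ e) : e = s(x, sumE n e - x) := by
  induction e with
  | _ a b =>
    rcases Sym2.mem_iff.mp hx with rfl | rfl
    · rw [sumE_pair]; congr 1; ring
    · rw [sumE_pair, Sym2.eq_swap]; congr 1; ring

lemma dbl_inj (hn : 1 ≤ n) (x y : V) (h : x + x = y + y) : x = y := by
  have h1 : ((2*n+2 : ℕ) : V) = 1 := by
    have h0 : ((2*n+1 : ℕ) : V) = 0 := ZMod.natCast_self _
    push_cast at h0 ⊢
    linear_combination h0
  have h2 : ∀ z : V, ((n+1 : ℕ) : V) * (z + z) = z := by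
    intro z
    have : ((n+1:ℕ) : V) * (z + z) = ((2*n+2:ℕ) : V) * z := by push_cast; ring
    rw [this, h1, one_mul]
  calc x = ((n+1:ℕ) : V) * (x + x) := (h2 x).symm
    _ = ((n+1:ℕ) : V) * (y + y) := by rw [h]
    _ = y := h2 y

def matchedV (v : V) : Prop := ∃ j : Fin k, v = cc n k j ∨ v = -cc n k j

lemma not_matched_zero (hn : 1 ≤ n) (hkn : k ≤ n) : ¬ matchedV n k 0 := by
  rintro ⟨j, h | h⟩
  · exact cc_ne_zero n k hn hkn j h.symm
  · exact cc_ne_zero n k hn hkn j (by rw [← neg_neg (cc n k j), ← h, neg_zero])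

lemma mem_G0_edgeSet (x y : V) :
    s(x,y) ∈ ((⊤ : SimpleGraph V).deleteEdges (canonM n k)).edgeSet ↔
      x ≠ y ∧ s(x,y) ∉ canonM n k := by
  rw [SimpleGraph.edgeSet_deleteEdges, Set.mem_diff, SimpleGraph.edgeSet_top]
  simp [Sym2.mk_isDiag_iff]

lemma matched_mem_canonM (hn : 1 ≤ n) (hkn : k ≤ n) {v : V} (h : matchedV n k v) : s(v, -v) ∈ canonM n k :=
  (canonM_mem_iff n k hn hkn).mpr ⟨rfl, h⟩

/-- incidence characterization, many colors case -/
lemma incid (hn : 1 ≤ n) (hkn : k ≤ n) (v i : V) :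
    (∃ e ∈ ((⊤ : SimpleGraph V).deleteEdges (canonM n k)).edgeSet,
      sumE n e = i ∧ v ∈ e) ↔ (i ≠ v + v ∧ ¬(i = 0 ∧ matchedV n k v)) := by
  constructor
  · rintro ⟨e, he, hsum, hv⟩
    have hrec := recon n e v hv
    rw [hsum] at hrec
    rw [hrec, mem_G0_edgeSet] at he
    constructor
    · intro hi
      apply he.1
      rw [hi]; ring_nf
    · rintro ⟨rfl, hm⟩
      apply he.2
      have : (0 : V) - v = -v := by ring
      rw [this]
      exact matched_mem_canonM n k hn hkn hm
  · rintro ⟨h1, h2⟩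
    refine ⟨s(v, i - v), ?_, by rw [sumE_pair]; ring, Sym2.mem_mk_left _ _⟩
    rw [mem_G0_edgeSet]
    constructor
    · intro h; apply h1; linear_combination -h
    · intro hmem
      have hsum0 : v + (i - v) = 0 := canonM_sum_eq_zero n k hn hkn hmem
      have hi0 : i = 0 := by linear_combination hsum0
      apply h2
      refine ⟨hi0, ?_⟩
      obtain ⟨-, hm⟩ := (canonM_mem_iff n k hn hkn).mp hmem
      exact hm
end main

section upper
variable (n k : ℕ)
local notation "V" => ZMod (2*n+1)

/-- coloring with 2n+1 colors -/
lemma exists_locating_full (hn : 1 ≤ n) (hkn : k ≤ n) :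
    ∃ c : Sym2 V → Fin (2*n+1),
      IsEdgeLocatingColoring ((⊤ : SimpleGraph V).deleteEdges (canonM n k)) c := by
  have hV3 : 3 ≤ Fintype.card V := by
    rw [ZMod.card]; omega
  have hconn := matching_del_connected (canonM_isMatching n k hn hkn) hV3
  set G0 := (⊤ : SimpleGraph V).deleteEdges (canonM n k) with hG0
  refine ⟨fun e => (sumE n e : Fin (2*n+1)), ?_, ?_⟩
  · -- proper
    intro e he f hf hne ⟨x, hxe, hxf⟩ hc
    apply hne
    have hcc : sumE n e = sumE n f := hc
    rw [recon n e x hxe, recon n f x hxf, hcc]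
  · intro u v huv
    have hz : ∀ (w : V) (i : Fin (2*n+1)),
        classDist G0 (fun e => (sumE n e : Fin (2*n+1))) w i = 0 ↔
        ((i : V) ≠ w + w ∧ ¬((i : V) = 0 ∧ matchedV n k w)) := by
      intro w i
      exact (classDist_eq_zero_iff hconn _ w i).trans (incid n k hn hkn w (i : V))
    by_cases hu0 : u + u = 0 ∧ matchedV n k v
    · -- use i = v + v
      have hu : u = 0 := dbl_inj n hn u 0 (by rw [hu0.1]; ring)
      refine ⟨(v + v : V), fun hcd => ?_⟩
      have h1 : classDist G0 (fun e => (sumE n e : Fin (2*n+1))) u (v+v) = 0 := by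
        refine (hz u (v+v)).mpr ⟨?_, ?_⟩
        · intro h
          exact huv (dbl_inj n hn v u h).symm
        · rintro ⟨h0, -⟩
          exact huv (by rw [hu, dbl_inj n hn v 0 (by rw [h0]; exact (add_zero _).symm)])
      have h2 : classDist G0 (fun e => (sumE n e : Fin (2*n+1))) v (v+v) ≠ 0 := by
        intro h
        exact ((hz v (v+v)).mp h).1 rfl
      rw [hcd] at h1
      exact h2 h1
    · refine ⟨(u + u : V), fun hcd => ?_⟩
      have h1 : classDist G0 (fun e => (sumE n e : Fin (2*n+1))) v (u+u) = 0 :=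
        (hz v (u+u)).mpr ⟨fun h => huv (dbl_inj n hn u v h), fun hcon => hu0 hcon⟩
      have h2 : classDist G0 (fun e => (sumE n e : Fin (2*n+1))) u (u+u) ≠ 0 := by
        intro h
        exact ((hz u (u+u)).mp h).1 rfl
      rw [← hcd] at h1
      exact h2 h1
end upper

section uppern
variable (n : ℕ)
local notation "V" => ZMod (2*n+1)

lemma matched_of_ne_zero (hn : 1 ≤ n) (x : V) (hx : x ≠ 0) : matchedV n n x := by
  have hvlt : x.val < 2*n+1 := ZMod.val_lt x
  have hv1 : 1 ≤ x.val := by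
    rcases Nat.eq_zero_or_pos x.val with h | h
    · exact absurd ((ZMod.val_eq_zero x).mp h) hx
    · exact h
  by_cases hle : x.val ≤ n
  · refine ⟨⟨x.val - 1, by omega⟩, Or.inl ?_⟩
    apply (ZMod.val_injective _)
    rw [val_cc n n hn (le_refl n)]
    simp only
    omega
  · refine ⟨⟨2*n - x.val, by omega⟩, Or.inr ?_⟩
    apply (ZMod.val_injective _)
    rw [val_neg_cc n n hn (le_refl n)]
    simp only
    omega

lemma sum_ne_zero (hn : 1 ≤ n) (e : Sym2 V)
    (he : e ∈ ((⊤ : SimpleGraph V).deleteEdges (canonM n n)).edgeSet) : sumE n e ≠ 0 := by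
  induction e with
  | _ a b =>
    rw [mem_G0_edgeSet] at he
    intro h0
    rw [sumE_pair] at h0
    have hb : b = -a := by linear_combination h0
    have ha : a ≠ 0 := by
      rintro rfl
      exact he.1 (by rw [hb]; ring)
    exact he.2 (hb ▸ matched_mem_canonM n n hn (le_refl n) (matched_of_ne_zero n hn a ha))

lemma mod_inj_aux {n a b : ℕ} (h1 : 1 ≤ a) (h2 : a ≤ 2*n) (h3 : 1 ≤ b) (h4 : b ≤ 2*n)
    (h : a % (2*n) = b % (2*n)) : a = b := by
  rcases Nat.lt_or_ge a (2*n) with ha | ha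
  · rcases Nat.lt_or_ge b (2*n) with hb | hb
    · rwa [Nat.mod_eq_of_lt ha, Nat.mod_eq_of_lt hb] at h
    · have hb' : b = 2*n := by omega
      rw [Nat.mod_eq_of_lt ha, hb', Nat.mod_self] at h
      omega
  · have ha' : a = 2*n := by omega
    rcases Nat.lt_or_ge b (2*n) with hb | hb
    · rw [ha', Nat.mod_self, Nat.mod_eq_of_lt hb] at h
      omega
    · omega

/-- the sum value corresponding to color i -/
def sI (i : Fin (2*n)) : V := ((if (i : ℕ) = 0 then 2*n else (i : ℕ) : ℕ) : V)

lemma val_sI (hn : 1 ≤ n) (i : Fin (2*n)) :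
    (sI n i).val = if (i : ℕ) = 0 then 2*n else (i : ℕ) := by
  rw [sI, ZMod.val_cast_of_lt]
  split <;> [omega; exact lt_trans i.2 (by omega)]

lemma sI_range (hn : 1 ≤ n) (i : Fin (2*n)) : 1 ≤ (sI n i).val ∧ (sI n i).val ≤ 2*n := by
  rw [val_sI n hn]
  have := i.2
  split <;> omega

lemma sI_surj (hn : 1 ≤ n) (w : V) (hw : w ≠ 0) :
    ∃ i : Fin (2*n), sI n i = w := by
  have hvlt : w.val < 2*n+1 := ZMod.val_lt w
  have hv1 : 1 ≤ w.val := by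
    rcases Nat.eq_zero_or_pos w.val with h | h
    · exact absurd ((ZMod.val_eq_zero w).mp h) hw
    · exact h
  refine ⟨⟨w.val % (2*n), Nat.mod_lt _ (by omega)⟩, ?_⟩
  apply ZMod.val_injective
  rw [val_sI n hn]
  simp only
  rcases Nat.lt_or_ge w.val (2*n) with h | h
  · rw [Nat.mod_eq_of_lt h, if_neg (by omega)]
  · have : w.val = 2*n := by omega
    rw [this, Nat.mod_self, if_pos rfl]

/-- color of an edge determines its sum, k = n case -/
lemma color_eq_iff (hn : 1 ≤ n) (e : Sym2 V) (hs : sumE n e ≠ 0) (i : Fin (2*n)) :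
    (⟨(sumE n e).val % (2*n), Nat.mod_lt _ (by omega)⟩ : Fin (2*n)) = i ↔ sumE n e = sI n i := by
  have hvlt : (sumE n e).val < 2*n+1 := ZMod.val_lt _
  have hv1 : 1 ≤ (sumE n e).val := by
    rcases Nat.eq_zero_or_pos (sumE n e).val with h | h
    · exact absurd ((ZMod.val_eq_zero _).mp h) hs
    · exact h
  constructor
  · intro h
    have hmod : (sumE n e).val % (2*n) = (i : ℕ) := by
      have := congrArg (fun x : Fin (2*n) => (x : ℕ)) h
      simpa using this
    apply ZMod.val_injective
    apply mod_inj_aux (n := n) hv1 (by omega) (sI_range n hn i).1 (sI_range n hn i).2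
    rw [hmod, val_sI n hn]
    split
    · rename_i h0; rw [h0, Nat.mod_self]
    · rename_i h0
      have := i.2
      rw [Nat.mod_eq_of_lt (by omega)]
  · intro h
    ext
    simp only
    rw [h, val_sI n hn]
    split
    · rename_i h0; rw [Nat.mod_self, h0]
    · rename_i h0
      have := i.2
      rw [Nat.mod_eq_of_lt (by omega)]

/-- incidence characterization, k = n case -/
lemma incidn (hn : 1 ≤ n) (v : V) (i : Fin (2*n)) :
    (∃ e ∈ ((⊤ : SimpleGraph V).deleteEdges (canonM n n)).edgeSet,
      (⟨(sumE n e).val % (2*n), Nat.mod_lt _ (by omega)⟩ : Fin (2*n)) = i ∧ v ∈ e) ↔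
      sI n i ≠ v + v := by
  constructor
  · rintro ⟨e, he, hc, hv⟩
    have hs := sum_ne_zero n hn e he
    have hsum : sumE n e = sI n i := (color_eq_iff n hn e hs i).mp hc
    have hrec := recon n e v hv
    rw [hsum] at hrec
    rw [hrec, mem_G0_edgeSet] at he
    intro hi
    exact he.1 (by rw [hi]; ring_nf)
  · intro hne
    have hsival : 1 ≤ (sI n i).val ∧ (sI n i).val ≤ 2*n := sI_range n hn i
    have hsi0 : sI n i ≠ 0 := by
      intro h
      rw [h, ZMod.val_zero] at hsival
      omega
    refine ⟨s(v, sI n i - v), ?_, ?_, Sym2.mem_mk_left _ _⟩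
    · rw [mem_G0_edgeSet]
      constructor
      · intro h; apply hne; linear_combination -h
      · intro hmem
        exact hsi0 (by
          have := canonM_sum_eq_zero n n hn (le_refl n) hmem
          linear_combination this)
    · rw [(color_eq_iff n hn _ (by rw [sumE_pair]; intro h; exact hsi0 (by linear_combination h)) i)]
      rw [sumE_pair]; ring
end uppern

section uppern2
variable (n : ℕ)
local notation "V" => ZMod (2*n+1)

lemma exists_locating_2n (hn : 1 ≤ n) :
    ∃ c : Sym2 V → Fin (2*n),
      IsEdgeLocatingColoring ((⊤ : SimpleGraph V).deleteEdges (canonM n n)) c := by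
  have hV3 : 3 ≤ Fintype.card V := by rw [ZMod.card]; omega
  have hconn := matching_del_connected (canonM_isMatching n n hn (le_refl n)) hV3
  set G0 := (⊤ : SimpleGraph V).deleteEdges (canonM n n) with hG0
  set c : Sym2 V → Fin (2*n) :=
    fun e => ⟨(sumE n e).val % (2*n), Nat.mod_lt _ (by omega)⟩ with hc
  refine ⟨c, ?_, ?_⟩
  · intro e he f hf hne ⟨x, hxe, hxf⟩ hcc
    apply hne
    have hse := sum_ne_zero n hn e he
    have hsf := sum_ne_zero n hn f hf
    have h1 : sumE n e = sI n (c f) := by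
      rw [← hcc]
      exact (color_eq_iff n hn e hse (c e)).mp rfl
    have h2 : sumE n f = sI n (c f) := (color_eq_iff n hn f hsf (c f)).mp rfl
    rw [recon n e x hxe, recon n f x hxf, h1, h2]
  · intro u v huv
    have hz : ∀ (w : V) (i : Fin (2*n)),
        classDist G0 c w i = 0 ↔ sI n i ≠ w + w := by
      intro w i
      rw [classDist_eq_zero_iff hconn, ← incidn n hn w i]
    rcases (by
      by_contra hcon
      push_neg at hcon
      exact huv (hcon.1.trans hcon.2.symm) : u ≠ 0 ∨ v ≠ 0) with h0 | h0
    · obtain ⟨i, hi⟩ := sI_surj n hn (u + u) (fun h => h0 (dbl_inj n hn u 0 (by rw [h]; ring)))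
      refine ⟨i, fun hcd => ?_⟩
      have h1 : classDist G0 c v i = 0 := (hz v i).mpr (by
        rw [hi]; exact fun h => huv (dbl_inj n hn u v h))
      have h2 : classDist G0 c u i ≠ 0 := fun h => ((hz u i).mp h) hi
      rw [← hcd] at h1
      exact h2 h1
    · obtain ⟨i, hi⟩ := sI_surj n hn (v + v) (fun h => h0 (dbl_inj n hn v 0 (by rw [h]; ring)))
      refine ⟨i, fun hcd => ?_⟩
      have h1 : classDist G0 c u i = 0 := (hz u i).mpr (by
        rw [hi]; exact fun h => huv (dbl_inj n hn v u h).symm)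
      have h2 : classDist G0 c v i ≠ 0 := fun h => ((hz v i).mp h) hi
      rw [hcd] at h1
      exact h2 h1
end uppern2

section lower
variable {V : Type*} [Fintype V] [DecidableEq V]

/-- degree lower bound: if some vertex is not covered by M, any locating coloring of
`⊤ \ M` needs at least `card V - 1` colors -/
lemma lower_degree {M : Set (Sym2 V)} {v0 : V} (hv0 : ∀ e ∈ M, v0 ∉ e)
    {k' : ℕ} {c : Sym2 V → Fin k'}
    (hc : IsEdgeLocatingColoring ((⊤ : SimpleGraph V).deleteEdges M) c) :
    Fintype.card V - 1 ≤ k' := by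
  classical
  have hmem : ∀ x : V, x ≠ v0 → s(v0, x) ∈ ((⊤ : SimpleGraph V).deleteEdges M).edgeSet := by
    intro x hx
    rw [SimpleGraph.edgeSet_deleteEdges, Set.mem_diff, SimpleGraph.edgeSet_top]
    refine ⟨by simp [Sym2.mk_isDiag_iff]; exact fun h => hx h.symm, fun hm => hv0 _ hm (Sym2.mem_mk_left _ _)⟩
  have hinj : Function.Injective (fun x : {x : V // x ≠ v0} => c s(v0, (x : V))) := by
    rintro ⟨x, hx⟩ ⟨y, hy⟩ h
    simp only at h
    by_contra hne
    have hxy : x ≠ y := fun hh => hne (Subtype.ext hh)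
    have hedne : s(v0, x) ≠ s(v0, y) := by
      intro hcontra
      rw [Sym2.eq_iff] at hcontra
      rcases hcontra with ⟨-, h2⟩ | ⟨h1, h2⟩
      · exact hxy h2
      · exact hx h2
    exact hc.1 _ (hmem x hx) _ (hmem y hy) hedne ⟨v0, Sym2.mem_mk_left _ _, Sym2.mem_mk_left _ _⟩ h
  have hcard := Fintype.card_le_of_injective _ hinj
  rw [Fintype.card_fin] at hcard
  have : Fintype.card {x : V // x ≠ v0} = Fintype.card V - 1 := by
    rw [Fintype.card_subtype_compl, Fintype.card_subtype_eq]
  omega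

/-- counting lower bound -/
lemma lower_count {M : Set (Sym2 V)} {n k : ℕ} (hn : 1 ≤ n) (hcardV : Fintype.card V = 2*n+1)
    (hM : IsMatchingSet (⊤ : SimpleGraph V) M) (hMcard : M.ncard = k) (hk : k < n)
    {k' : ℕ} {c : Sym2 V → Fin k'}
    (hc : IsEdgeLocatingColoring ((⊤ : SimpleGraph V).deleteEdges M) c) :
    2*n+1 ≤ k' := by
  classical
  by_contra hlt
  push_neg at hlt
  set G0 := (⊤ : SimpleGraph V).deleteEdges M with hG0
  -- the edge finset of G0
  have hES : G0.edgeSet = (⊤ : SimpleGraph V).edgeSet \ M := SimpleGraph.edgeSet_deleteEdges M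
  have hEcard : G0.edgeFinset.card = n*(2*n+1) - k := by
    rw [← Set.ncard_coe_finset, SimpleGraph.coe_edgeFinset]
    rw [hES, Set.ncard_diff hM.1, hMcard]
    have htop : ((⊤ : SimpleGraph V).edgeSet).ncard = n*(2*n+1) := by
      rw [Set.ncard_eq_toFinset_card']
      have := SimpleGraph.card_edgeFinset_top_eq_card_choose_two (V := V)
      rw [SimpleGraph.edgeFinset] at this
      rw [this, hcardV, Nat.choose_two_right]
      have : (2*n+1) - 1 = 2*n := by omega
      rw [this]
      have h2 : (2*n+1)*(2*n) = 2*(n*(2*n+1)) := by ring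
      omega
    rw [htop]
  -- color classes
  set S : Fin k' → Finset (Sym2 V) := fun i => G0.edgeFinset.filter (fun e => c e = i) with hS
  have hSub : G0.edgeFinset ⊆ (Finset.univ : Finset (Fin k')).biUnion S := by
    intro e he
    rw [Finset.mem_biUnion]
    exact ⟨c e, Finset.mem_univ _, Finset.mem_filter.mpr ⟨he, rfl⟩⟩
  have hSized : ∀ i, (S i).card ≤ n := by
    intro i
    -- vertex sets of edges in S i are pairwise disjoint, each of size 2
    set T : Sym2 V → Finset V := fun e => {e.out.1, e.out.2} with hT
    have hT2 : ∀ e ∈ S i, (T e).card = 2 := by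
      intro e he
      have hnd : ¬ e.IsDiag := by
        have : e ∈ G0.edgeSet := by
          rw [← SimpleGraph.mem_edgeFinset]
          exact (Finset.mem_filter.mp he).1
        rw [hES] at this
        have := this.1
        rwa [SimpleGraph.edgeSet_top] at this
      rw [hT]
      rw [Finset.card_insert_of_notMem, Finset.card_singleton]
      simp only [Finset.mem_singleton]
      intro h
      exact hnd (by rw [← e.out_eq]; exact Sym2.mk_isDiag_iff.mpr h)
    have hdisj : ∀ e ∈ S i, ∀ f ∈ S i, e ≠ f → Disjoint (T e) (T f) := by
      intro e he f hf hne
      rw [Finset.disjoint_left]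
      intro x hxe hxf
      have hxe' : x ∈ e := by
        rcases Finset.mem_insert.mp hxe with h | h
        · rw [h]; exact Sym2.out_fst_mem e
        · rw [Finset.mem_singleton.mp h]; exact Sym2.out_snd_mem e
      have hxf' : x ∈ f := by
        rcases Finset.mem_insert.mp hxf with h | h
        · rw [h]; exact Sym2.out_fst_mem f
        · rw [Finset.mem_singleton.mp h]; exact Sym2.out_snd_mem f
      have hee : e ∈ G0.edgeSet := by
        rw [← SimpleGraph.mem_edgeFinset]; exact (Finset.mem_filter.mp he).1
      have hff : f ∈ G0.edgeSet := by
        rw [← SimpleGraph.mem_edgeFinset]; exact (Finset.mem_filter.mp hf).1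
      exact hc.1 e hee f hff hne ⟨x, hxe', hxf'⟩
        (((Finset.mem_filter.mp he).2).trans ((Finset.mem_filter.mp hf).2).symm)
    have hbU : ((S i).biUnion T).card = ∑ e ∈ S i, (T e).card :=
      Finset.card_biUnion hdisj
    have hle : ((S i).biUnion T).card ≤ 2*n+1 := by
      rw [← hcardV, ← Finset.card_univ]
      exact Finset.card_le_card (Finset.subset_univ _)
    rw [hbU, Finset.sum_congr rfl hT2, Finset.sum_const, smul_eq_mul] at hle
    omega
  have hcount : G0.edgeFinset.card ≤ k' * n := by
    calc G0.edgeFinset.card ≤ ((Finset.univ : Finset (Fin k')).biUnion S).card :=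
        Finset.card_le_card hSub
      _ ≤ ∑ i, (S i).card := Finset.card_biUnion_le
      _ ≤ ∑ _i : Fin k', n := Finset.sum_le_sum (fun i _ => hSized i)
      _ = k' * n := by rw [Finset.sum_const, Finset.card_univ, Fintype.card_fin, smul_eq_mul]
  rw [hEcard] at hcount
  have h1 : k' * n ≤ 2*n*n := Nat.mul_le_mul_right n (by omega)
  have h2 : n*(2*n+1) = 2*n*n + n := by ring
  omega
end lower



lemma canonM_eq_range_gcan (n k : ℕ) :
    canonM n k = Set.range (fun i : Fin k => s(gcan n k (i, false), gcan n k (i, true))) := by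
  simp only [gcan, canonM]
  rfl

theorem main_zmod (n k : ℕ) (hn : 1 ≤ n) (hk1 : 1 ≤ k) (hkn : k ≤ n)
    (M : Set (Sym2 (ZMod (2 * n + 1))))
    (hM : IsMatchingSet (⊤ : SimpleGraph (ZMod (2 * n + 1))) M) (hcard : M.ncard = k) :
    edgeLocatingChromaticNumber ((⊤ : SimpleGraph (ZMod (2 * n + 1))).deleteEdges M) =
      if k = n then 2 * n else 2 * n + 1 := by
  classical
  obtain ⟨π, hπ⟩ := exists_perm_matching hM hcard (gcan n k) (gcan_inj n k hn hkn)
  rw [← canonM_eq_range_gcan n k] at hπ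
  have φ : ((⊤ : SimpleGraph (ZMod (2*n+1))).deleteEdges M) ≃g
      ((⊤ : SimpleGraph (ZMod (2*n+1))).deleteEdges (canonM n k)) := delIso π M (canonM n k) hπ
  set S := {k' : ℕ | ∃ c : Sym2 (ZMod (2*n+1)) → Fin k',
    IsEdgeLocatingColoring ((⊤ : SimpleGraph (ZMod (2*n+1))).deleteEdges M) c} with hSdef
  have transfer_to : ∀ {k' : ℕ}, (∃ c : Sym2 (ZMod (2*n+1)) → Fin k',
      IsEdgeLocatingColoring ((⊤ : SimpleGraph (ZMod (2*n+1))).deleteEdges (canonM n k)) c) →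
      k' ∈ S := by
    rintro k' ⟨c, hc⟩
    exact ⟨fun f => c (Sym2.map φ f), iso_locating φ c hc⟩
  have transfer_from : ∀ {k' : ℕ}, k' ∈ S → (∃ c : Sym2 (ZMod (2*n+1)) → Fin k',
      IsEdgeLocatingColoring ((⊤ : SimpleGraph (ZMod (2*n+1))).deleteEdges (canonM n k)) c) := by
    rintro k' ⟨c, hc⟩
    exact ⟨fun f => c (Sym2.map φ.symm f), iso_locating φ.symm c hc⟩
  have hlb : ∀ k' ∈ S, 2*n ≤ k' := by
    intro k' hk'
    obtain ⟨c, hc⟩ := transfer_from hk'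
    have h0 : ∀ e ∈ canonM n k, (0 : ZMod (2*n+1)) ∉ e := by
      rintro e ⟨i, rfl⟩ h0
      rcases Sym2.mem_iff.mp h0 with h | h
      · exact cc_ne_zero n k hn hkn i h.symm
      · exact cc_ne_zero n k hn hkn i (by rw [← neg_neg (cc n k i), ← h, neg_zero])
    have := lower_degree h0 hc
    rw [ZMod.card] at this
    omega
  show edgeLocatingChromaticNumber _ = _
  rw [edgeLocatingChromaticNumber]
  by_cases hkeq : k = n
  · subst hkeq
    rw [if_pos rfl]
    apply le_antisymm
    · apply Nat.sInf_le
      exact transfer_to (exists_locating_2n k hn)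
    · refine le_csInf ⟨2*k, transfer_to (exists_locating_2n k hn)⟩ hlb
  · rw [if_neg hkeq]
    have hklt : k < n := lt_of_le_of_ne hkn hkeq
    apply le_antisymm
    · apply Nat.sInf_le
      exact transfer_to (exists_locating_full n k hn hkn)
    · refine le_csInf ⟨2*n+1, transfer_to (exists_locating_full n k hn hkn)⟩ ?_
      intro k' hk'
      obtain ⟨c, hc⟩ := transfer_from hk'
      exact lower_count hn (ZMod.card _) (canonM_isMatching n k hn hkn)
        (canonM_ncard n k hn hkn) hklt hc

/-- For `n ≥ 1` and a matching `M_k` with `1 ≤ k ≤ n` edges in `K_{2n+1}`, the edge-locating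
chromatic number of `K_{2n+1} - M_k` is `2n` if `k = n`, and `2n + 1` if `1 ≤ k ≤ n - 1`. -/
theorem stmt_9 (n k : ℕ) (hn : 1 ≤ n) (hk1 : 1 ≤ k) (hkn : k ≤ n)
    (M : Set (Sym2 (Fin (2 * n + 1))))
    (hM : IsMatchingSet (⊤ : SimpleGraph (Fin (2 * n + 1))) M) (hcard : M.ncard = k) :
    edgeLocatingChromaticNumber ((⊤ : SimpleGraph (Fin (2 * n + 1))).deleteEdges M) =
      if k = n then 2 * n else 2 * n + 1 := by
  exact main_zmod n k hn hk1 hkn M hM hcard
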